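/- Let A be a finite-dimensional Hilbert space decomposed as A = A_0 ⊕ A_0^⊥ with dim A_0 ≥ 2. The set of operators of the form V_0 ⊕ (λ · I) — where V_0 is unitary on A_0 that admits eigenvector with eigenvalue λ — together with taking complex linear combinations spans the algebra L(A_0) ⊕ ℂ·I_{A_0^⊥} = { M ⊕ a I : M ∈ L(A_0), a ∈ ℂ }. -/

import Mathlib

open Matrix

theorem PEquiv.equiv_toPEquiv_toMatrix {n α : Type*} [DecidableEq n] [Zero α] [One α]
    (σ : n ≃ n) (i j : n) : (σ.toPEquiv.toMatrix : Matrix n n α) i j = (1 : Matrix n n α) (σ i) j := by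
  rw [PEquiv.toMatrix_toPEquiv_apply, Matrix.one_apply, Pi.single_apply]
  by_cases h : σ i = j
  · subst h; simp
  · simp [h, Ne.symm h]

def Matrix.stdBasisMatrix {m n α : Type*} [DecidableEq m] [DecidableEq n] [Zero α]
    (i : m) (j : n) (a : α) : Matrix m n α :=
  Matrix.of fun i' j' => if i = i' ∧ j = j' then a else 0

theorem Matrix.matrix_eq_sum_stdBasisMatrix {m n α : Type*} [DecidableEq m] [DecidableEq n]
    [AddCommMonoid α] [Fintype m] [Fintype n] (x : Matrix m n α) :
    x = ∑ i : m, ∑ j : n, Matrix.stdBasisMatrix i j (x i j) :=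
  Matrix.matrix_eq_sum_single x

theorem Matrix.smul_stdBasisMatrix {m n α R : Type*} [DecidableEq m] [DecidableEq n] [Zero α]
    [SMulZeroClass R α] (r : R) (i : m) (j : n) (a : α) :
    r • Matrix.stdBasisMatrix i j a = Matrix.stdBasisMatrix i j (r • a) :=
  Matrix.smul_single r i j a

/-- A diagonal matrix with entries of modulus one (here ±1) is unitary. -/
lemma aux_diag_unitary {n : Type*} [Fintype n] [DecidableEq n] (d : n → ℂ)
    (hd : ∀ k, d k = 1 ∨ d k = -1) :
    Matrix.diagonal d ∈ Matrix.unitaryGroup n ℂ := by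
  rw [Matrix.mem_unitaryGroup_iff]
  rw [Matrix.star_eq_conjTranspose, Matrix.diagonal_conjTranspose,
    Matrix.diagonal_mul_diagonal]
  ext a b
  by_cases hab : a = b
  · subst hab
    rcases hd a with h | h <;> simp [Matrix.diagonal_apply, h]
  · simp [Matrix.diagonal_apply, Matrix.one_apply, hab]

/-- Swap permutation matrix is unitary. -/
lemma aux_swap_unitary {n : Type*} [Fintype n] [DecidableEq n] (i j : n) :
    ((Equiv.swap i j).toPEquiv.toMatrix : Matrix n n ℂ) ∈ Matrix.unitaryGroup n ℂ := by
  rw [Matrix.mem_unitaryGroup_iff']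
  have hsym : (((Equiv.swap i j).toPEquiv.toMatrix : Matrix n n ℂ))ᴴ
      = (Equiv.swap i j).toPEquiv.toMatrix := by
    ext a b
    rw [Matrix.conjTranspose_apply, PEquiv.equiv_toPEquiv_toMatrix,
      PEquiv.equiv_toPEquiv_toMatrix]
    have : Equiv.swap i j b = a ↔ Equiv.swap i j a = b := by
      constructor <;> · rintro rfl; simp
    simp [Matrix.one_apply, this, apply_ite (starRingEnd ℂ)]
  rw [Matrix.star_eq_conjTranspose, hsym, ← PEquiv.toMatrix_trans,
    ← Equiv.toPEquiv_trans, Equiv.swap_swap, Equiv.toPEquiv_refl, PEquiv.toMatrix_refl]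

/-- Span of the unitary group is everything. -/
lemma aux_span_unitary {n : Type*} [Fintype n] [DecidableEq n] :
    Submodule.span ℂ (Matrix.unitaryGroup n ℂ : Set (Matrix n n ℂ)) = ⊤ := by
  rw [eq_top_iff]
  intro M _
  rw [Matrix.matrix_eq_sum_stdBasisMatrix M]
  refine Submodule.sum_mem _ fun i _ => Submodule.sum_mem _ fun j _ => ?_
  rw [show Matrix.stdBasisMatrix i j (M i j) = M i j • Matrix.stdBasisMatrix i j (1 : ℂ) by
    rw [Matrix.smul_stdBasisMatrix, smul_eq_mul, mul_one]]
  refine Submodule.smul_mem _ _ ?_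
  by_cases hij : i = j
  · subst hij
    have hD : Matrix.diagonal (fun k => if k = i then (-1 : ℂ) else 1)
        ∈ Matrix.unitaryGroup n ℂ := by
      apply aux_diag_unitary; intro k; by_cases h : k = i <;> simp [h]
    have hkey : Matrix.stdBasisMatrix i i (1 : ℂ)
        = (2⁻¹ : ℂ) • ((1 : Matrix n n ℂ) -
          Matrix.diagonal (fun k => if k = i then (-1 : ℂ) else 1)) := by
      ext a b
      by_cases hab : a = b
      · subst hab
        by_cases hai : a = i
        · subst hai
          simp [Matrix.stdBasisMatrix, Matrix.one_apply, Matrix.diagonal_apply]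
          norm_num
        · simp [Matrix.stdBasisMatrix, Matrix.one_apply, Matrix.diagonal_apply, hai,
            Ne.symm hai]
      · have hne : ¬(i = a ∧ i = b) := fun h => hab (h.1.symm.trans h.2)
        simp [Matrix.stdBasisMatrix, Matrix.one_apply, Matrix.diagonal_apply, hab, hne]
    rw [hkey]
    exact Submodule.smul_mem _ _ (Submodule.sub_mem _
      (Submodule.subset_span (Submonoid.one_mem _ : (1 : Matrix n n ℂ) ∈ _))
      (Submodule.subset_span hD))
  · set P : Matrix n n ℂ := (Equiv.swap i j).toPEquiv.toMatrix with hP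
    set d : n → ℂ := fun k => if k = j then (-1 : ℂ) else 1 with hd_def
    have hDu : Matrix.diagonal d ∈ Matrix.unitaryGroup n ℂ := by
      apply aux_diag_unitary; intro k; by_cases h : k = j <;> simp [hd_def, h]
    have hPu := aux_swap_unitary (n := n) i j
    have hPDu : P * Matrix.diagonal d ∈ Matrix.unitaryGroup n ℂ := mul_mem hPu hDu
    have hkey : Matrix.stdBasisMatrix i j (1 : ℂ)
        = (2⁻¹ : ℂ) • (P - P * Matrix.diagonal d) := by
      ext a b
      rw [Matrix.smul_apply, Matrix.sub_apply, Matrix.mul_diagonal]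
      rw [hP, PEquiv.equiv_toPEquiv_toMatrix]
      have hdj : d j = -1 := by simp [hd_def]
      by_cases hbj : b = j
      · by_cases hai : a = i
        · simp [Matrix.stdBasisMatrix, Matrix.one_apply, hai, hbj,
            Equiv.swap_apply_left, hdj]
          norm_num
        · have hsw : Equiv.swap i j a ≠ j := fun h => hai (by
            have := congrArg (Equiv.swap i j) h
            simpa using this)
          simp [Matrix.stdBasisMatrix, Matrix.one_apply, hbj, hsw, hdj]
          exact fun h => hai h.symm
      · have hdb : d b = 1 := by simp [hd_def, hbj]
        have hne : ¬(i = a ∧ j = b) := fun h => hbj h.2.symm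
        simp [Matrix.stdBasisMatrix, Matrix.one_apply, hne, hdb]
    rw [hkey]
    exact Submodule.smul_mem _ _ (Submodule.sub_mem _
      (Submodule.subset_span hPu) (Submodule.subset_span hPDu))

/-- For `dim A_0 ≥ 2`, the operators `V_0 ⊕ λ·I` (with `V_0` unitary on `A_0`
having eigenvalue `λ`) span `{ M ⊕ a·I : M ∈ L(A_0), a ∈ ℂ }`. -/
theorem stmt16 {a0 a1 : Type*} [Fintype a0] [Fintype a1] [DecidableEq a0] [DecidableEq a1]
    (hdim : 2 ≤ Fintype.card a0) :
    Submodule.span ℂ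
      {W : Matrix (a0 ⊕ a1) (a0 ⊕ a1) ℂ |
        ∃ V0 ∈ Matrix.unitaryGroup a0 ℂ, ∃ lam : ℂ,
          (∃ x : a0 → ℂ, x ≠ 0 ∧ Matrix.mulVec V0 x = lam • x) ∧
          W = Matrix.fromBlocks V0 0 0 (lam • (1 : Matrix a1 a1 ℂ))} =
    Submodule.span ℂ
      {W : Matrix (a0 ⊕ a1) (a0 ⊕ a1) ℂ |
        ∃ (M : Matrix a0 a0 ℂ) (c : ℂ),
          W = Matrix.fromBlocks M 0 0 (c • (1 : Matrix a1 a1 ℂ))} := by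
  apply le_antisymm
  · refine Submodule.span_le.mpr ?_
    rintro W ⟨V0, hV0, lam, hx, rfl⟩
    exact Submodule.subset_span ⟨V0, lam, rfl⟩
  · refine Submodule.span_le.mpr ?_
    rintro W ⟨M, c, rfl⟩
    obtain ⟨i0, j0, hij⟩ := Fintype.exists_pair_of_one_lt_card (by omega : 1 < Fintype.card a0)
    -- E := fromBlocks 0 0 0 1 is in the span
    have hE : Matrix.fromBlocks (0 : Matrix a0 a0 ℂ) 0 0 (1 : Matrix a1 a1 ℂ) ∈
        Submodule.span ℂ
          {W : Matrix (a0 ⊕ a1) (a0 ⊕ a1) ℂ |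
            ∃ V0 ∈ Matrix.unitaryGroup a0 ℂ, ∃ lam : ℂ,
              (∃ x : a0 → ℂ, x ≠ 0 ∧ Matrix.mulVec V0 x = lam • x) ∧
              W = Matrix.fromBlocks V0 0 0 (lam • (1 : Matrix a1 a1 ℂ))} := by
      set d : a0 → ℂ := fun k => if k = i0 then 1 else -1 with hd_def
      have hDu : Matrix.diagonal d ∈ Matrix.unitaryGroup a0 ℂ :=
        aux_diag_unitary d (fun k => by by_cases h : k = i0 <;> simp [hd_def, h])
      have heig1 : Matrix.mulVec (Matrix.diagonal d) (Pi.single i0 1 : a0 → ℂ)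
          = (1 : ℂ) • (Pi.single i0 1 : a0 → ℂ) := by
        funext k
        rw [Matrix.mulVec_diagonal]
        by_cases h : k = i0 <;> simp [hd_def, h, Pi.single_apply]
      have heig2 : Matrix.mulVec (Matrix.diagonal d) (Pi.single j0 1 : a0 → ℂ)
          = (-1 : ℂ) • (Pi.single j0 1 : a0 → ℂ) := by
        funext k
        rw [Matrix.mulVec_diagonal]
        by_cases h : k = j0
        · subst h
          simp [hd_def, hij.symm, Pi.single_apply]
        · simp [hd_def, h, Pi.single_apply]
      have hs1 : (Pi.single i0 1 : a0 → ℂ) ≠ 0 := by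
        intro h
        have := congrFun h i0
        simp at this
      have hs2 : (Pi.single j0 1 : a0 → ℂ) ≠ 0 := by
        intro h
        have := congrFun h j0
        simp at this
      have hW1 : Matrix.fromBlocks (Matrix.diagonal d) 0 0 ((1 : ℂ) • (1 : Matrix a1 a1 ℂ)) ∈
          Submodule.span ℂ
          {W : Matrix (a0 ⊕ a1) (a0 ⊕ a1) ℂ |
            ∃ V0 ∈ Matrix.unitaryGroup a0 ℂ, ∃ lam : ℂ,
              (∃ x : a0 → ℂ, x ≠ 0 ∧ Matrix.mulVec V0 x = lam • x) ∧
              W = Matrix.fromBlocks V0 0 0 (lam • (1 : Matrix a1 a1 ℂ))} :=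
        Submodule.subset_span ⟨_, hDu, 1, ⟨Pi.single i0 1, hs1, heig1⟩, rfl⟩
      have hW2 : Matrix.fromBlocks (Matrix.diagonal d) 0 0 ((-1 : ℂ) • (1 : Matrix a1 a1 ℂ)) ∈
          Submodule.span ℂ
          {W : Matrix (a0 ⊕ a1) (a0 ⊕ a1) ℂ |
            ∃ V0 ∈ Matrix.unitaryGroup a0 ℂ, ∃ lam : ℂ,
              (∃ x : a0 → ℂ, x ≠ 0 ∧ Matrix.mulVec V0 x = lam • x) ∧
              W = Matrix.fromBlocks V0 0 0 (lam • (1 : Matrix a1 a1 ℂ))} :=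
        Submodule.subset_span ⟨_, hDu, -1, ⟨Pi.single j0 1, hs2, heig2⟩, rfl⟩
      have key : Matrix.fromBlocks (0 : Matrix a0 a0 ℂ) 0 0 (1 : Matrix a1 a1 ℂ)
          = (2⁻¹ : ℂ) • (Matrix.fromBlocks (Matrix.diagonal d) 0 0 ((1 : ℂ) • (1 : Matrix a1 a1 ℂ))
            - Matrix.fromBlocks (Matrix.diagonal d) 0 0 ((-1 : ℂ) • (1 : Matrix a1 a1 ℂ))) := by
        ext i j
        rcases i with a | a <;> rcases j with b | b
        · simp
        · simp
        · simp
        · by_cases hab : a = b <;> simp [Matrix.one_apply, hab] <;> norm_num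
      rw [key]
      exact Submodule.smul_mem _ _ (Submodule.sub_mem _ hW1 hW2)
    have hUni : ∀ V0 ∈ Matrix.unitaryGroup a0 ℂ,
        Matrix.fromBlocks V0 0 0 (0 : Matrix a1 a1 ℂ) ∈
        Submodule.span ℂ
          {W : Matrix (a0 ⊕ a1) (a0 ⊕ a1) ℂ |
            ∃ V0 ∈ Matrix.unitaryGroup a0 ℂ, ∃ lam : ℂ,
              (∃ x : a0 → ℂ, x ≠ 0 ∧ Matrix.mulVec V0 x = lam • x) ∧
              W = Matrix.fromBlocks V0 0 0 (lam • (1 : Matrix a1 a1 ℂ))} := by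
      intro V0 hV0
      haveI : Nonempty a0 := Fintype.card_pos_iff.mp (by omega)
      obtain ⟨lam, hlam⟩ := Module.End.exists_eigenvalue (Matrix.mulVecLin V0)
      obtain ⟨x, hx⟩ := hlam.exists_hasEigenvector
      have hxe : Matrix.mulVec V0 x = lam • x := by
        have := hx.apply_eq_smul
        simpa [Matrix.mulVecLin_apply] using this
      have hWS : Matrix.fromBlocks V0 0 0 (lam • (1 : Matrix a1 a1 ℂ)) ∈
          Submodule.span ℂ
          {W : Matrix (a0 ⊕ a1) (a0 ⊕ a1) ℂ |
            ∃ V0 ∈ Matrix.unitaryGroup a0 ℂ, ∃ lam : ℂ,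
              (∃ x : a0 → ℂ, x ≠ 0 ∧ Matrix.mulVec V0 x = lam • x) ∧
              W = Matrix.fromBlocks V0 0 0 (lam • (1 : Matrix a1 a1 ℂ))} :=
        Submodule.subset_span ⟨V0, hV0, lam, ⟨x, hx.2, hxe⟩, rfl⟩
      have key : Matrix.fromBlocks V0 0 0 (0 : Matrix a1 a1 ℂ)
          = Matrix.fromBlocks V0 0 0 (lam • (1 : Matrix a1 a1 ℂ))
            - lam • Matrix.fromBlocks (0 : Matrix a0 a0 ℂ) 0 0 (1 : Matrix a1 a1 ℂ) := by
        ext i j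
        rcases i with a | a <;> rcases j with b | b <;> simp
      rw [key]
      exact Submodule.sub_mem _ hWS (Submodule.smul_mem _ _ hE)
    have hMall : ∀ M : Matrix a0 a0 ℂ,
        Matrix.fromBlocks M 0 0 (0 : Matrix a1 a1 ℂ) ∈
        Submodule.span ℂ
          {W : Matrix (a0 ⊕ a1) (a0 ⊕ a1) ℂ |
            ∃ V0 ∈ Matrix.unitaryGroup a0 ℂ, ∃ lam : ℂ,
              (∃ x : a0 → ℂ, x ≠ 0 ∧ Matrix.mulVec V0 x = lam • x) ∧
              W = Matrix.fromBlocks V0 0 0 (lam • (1 : Matrix a1 a1 ℂ))} := by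
      intro M
      have hM : M ∈ Submodule.span ℂ (Matrix.unitaryGroup a0 ℂ : Set (Matrix a0 a0 ℂ)) := by
        rw [aux_span_unitary]; trivial
      induction hM using Submodule.span_induction with
      | mem U hU => exact hUni U hU
      | zero => rw [Matrix.fromBlocks_zero]; exact zero_mem _
      | add x y _ _ hx hy =>
        have key : Matrix.fromBlocks (x + y) 0 0 (0 : Matrix a1 a1 ℂ)
            = Matrix.fromBlocks x 0 0 0 + Matrix.fromBlocks y 0 0 0 := by
          ext i j
          rcases i with a | a <;> rcases j with b | b <;> simp
        rw [key]; exact Submodule.add_mem _ hx hy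
      | smul r x _ hx =>
        have key : Matrix.fromBlocks (r • x) 0 0 (0 : Matrix a1 a1 ℂ)
            = r • Matrix.fromBlocks x 0 0 0 := by
          ext i j
          rcases i with a | a <;> rcases j with b | b <;> simp
        rw [key]; exact Submodule.smul_mem _ _ hx
    have key : Matrix.fromBlocks M 0 0 (c • (1 : Matrix a1 a1 ℂ))
        = Matrix.fromBlocks M 0 0 (0 : Matrix a1 a1 ℂ)
          + c • Matrix.fromBlocks (0 : Matrix a0 a0 ℂ) 0 0 (1 : Matrix a1 a1 ℂ) := by
      ext i j
      rcases i with a | a <;> rcases j with b | b <;> simp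
    rw [key]
    exact Submodule.add_mem _ (hMall M) (Submodule.smul_mem _ _ hE)
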